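/- Let (π*, B*) be an optimal attacker strategy, and let π be any guessing order with no inversions (i.e., p(π(a))·k(π(b)) ≥ p(π(b))·k(π(a)) for all positions a ≤ b). Then U(π, B*) ≥ U(π*, B*); in particular (π, B*) is also an optimal strategy. -/

import Mathlib

open Finset

/-- Success probability λ(π,B): sum of probabilities of the first B guesses. -/
noncomputable def lam (n : ℕ) (p : Fin n → ℝ) (π : Equiv.Perm (Fin n)) (B : ℕ) : ℝ :=
  ∑ t : Fin n, if t.val < B then p (π t) else 0

/-- Attacker utility U(π,B) = v·λ(π,B) − Σ_{t<B} k(π(t))·(1 − λ(π,t)). -/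
noncomputable def U (n : ℕ) (p k : Fin n → ℝ) (v : ℝ) (π : Equiv.Perm (Fin n)) (B : ℕ) : ℝ :=
  v * lam n p π B - ∑ t : Fin n, if t.val < B then k (π t) * (1 - lam n p π t.val) else 0

noncomputable def Spre (n Bstar : ℕ) (σ : Equiv.Perm (Fin n)) : Finset (Fin n) :=
  (Finset.univ.filter fun t : Fin n => t.val < Bstar).image σ


lemma sum_ite_succ {n : ℕ} (f : Fin n → ℝ) (B : ℕ) (hB : B < n) :
    ∑ t : Fin n, (if t.val < B + 1 then f t else 0)
      = (∑ t : Fin n, if t.val < B then f t else 0) + f ⟨B, hB⟩ := by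
  have h : ∀ t : Fin n, (if t.val < B + 1 then f t else 0)
      = (if t.val < B then f t else 0) + (if t = ⟨B, hB⟩ then f t else 0) := by
    intro t
    by_cases h1 : t = ⟨B, hB⟩
    · subst h1; simp
    · have h2 : t.val ≠ B := fun hh => h1 (Fin.ext hh)
      by_cases h3 : t.val < B
      · rw [if_pos (by omega), if_pos h3, if_neg h1, add_zero]
      · rw [if_neg (by omega), if_neg h3, if_neg h1, add_zero]
  rw [Finset.sum_congr rfl (fun t _ => h t), Finset.sum_add_distrib,
    Finset.sum_ite_eq' Finset.univ ⟨B, hB⟩ f, if_pos (Finset.mem_univ _)]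

lemma lam_step {n : ℕ} (p : Fin n → ℝ) (σ : Equiv.Perm (Fin n)) (B : ℕ) (hB : B < n) :
    lam n p σ (B + 1) = lam n p σ B + p (σ ⟨B, hB⟩) := by
  unfold lam; exact sum_ite_succ (fun t => p (σ t)) B hB

lemma U_step {n : ℕ} (p k : Fin n → ℝ) (v : ℝ) (σ : Equiv.Perm (Fin n)) (B : ℕ) (hB : B < n) :
    U n p k v σ (B + 1) = U n p k v σ B
      + (v * p (σ ⟨B, hB⟩) - k (σ ⟨B, hB⟩) * (1 - lam n p σ B)) := by
  unfold U
  rw [lam_step p σ B hB, sum_ite_succ (fun t => k (σ t) * (1 - lam n p σ t.val)) B hB]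
  ring

lemma lam_nonneg {n : ℕ} (p : Fin n → ℝ) (hp : ∀ i, 0 ≤ p i) (σ : Equiv.Perm (Fin n)) (B : ℕ) :
    0 ≤ lam n p σ B := by
  unfold lam
  apply Finset.sum_nonneg
  intro t _
  by_cases h : t.val < B <;> simp [h, hp]

lemma lam_le_one {n : ℕ} (p : Fin n → ℝ) (hp : ∀ i, 0 ≤ p i) (hpsum : ∑ i, p i ≤ 1)
    (σ : Equiv.Perm (Fin n)) (B : ℕ) : lam n p σ B ≤ 1 := by
  have h1 : lam n p σ B ≤ ∑ t : Fin n, p (σ t) := by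
    apply Finset.sum_le_sum
    intro t _
    by_cases h : t.val < B <;> simp [h, hp]
  have h2 : ∑ t : Fin n, p (σ t) = ∑ i, p i := Equiv.sum_comp σ p
  linarith

lemma lam_congr {n : ℕ} (p : Fin n → ℝ) (σ σ' : Equiv.Perm (Fin n)) (B : ℕ)
    (h : ∀ t : Fin n, t.val < B → σ t = σ' t) : lam n p σ B = lam n p σ' B := by
  unfold lam
  apply Finset.sum_congr rfl
  intro t _
  by_cases ht : t.val < B
  · rw [if_pos ht, if_pos ht, h t ht]
  · rw [if_neg ht, if_neg ht]

lemma U_congr {n : ℕ} (p k : Fin n → ℝ) (v : ℝ) (σ σ' : Equiv.Perm (Fin n)) (B : ℕ)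
    (h : ∀ t : Fin n, t.val < B → σ t = σ' t) : U n p k v σ B = U n p k v σ' B := by
  unfold U
  rw [lam_congr p σ σ' B h]
  congr 1
  apply Finset.sum_congr rfl
  intro t _
  by_cases ht : t.val < B
  · rw [if_pos ht, if_pos ht, h t ht,
      lam_congr p σ σ' t.val (fun u hu => h u (lt_trans hu ht))]
  · rw [if_neg ht, if_neg ht]

lemma lam_swap {n : ℕ} (p : Fin n → ℝ) (σ : Equiv.Perm (Fin n)) (i j : Fin n) (B : ℕ)
    (hij : i.val < B ↔ j.val < B) :
    lam n p (σ * Equiv.swap i j) B = lam n p σ B := by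
  unfold lam
  have key := Fintype.sum_equiv (Equiv.swap i j)
    (fun t => if (Equiv.swap i j t).val < B then p (σ (Equiv.swap i j t)) else 0)
    (fun t => if t.val < B then p (σ t) else 0) (fun t => rfl)
  rw [← key]
  apply Finset.sum_congr rfl
  intro t _
  have hcond : ((Equiv.swap i j t).val < B ↔ t.val < B) := by
    by_cases h1 : t = i
    · subst h1; rw [Equiv.swap_apply_left]; exact hij.symm
    · by_cases h2 : t = j
      · subst h2; rw [Equiv.swap_apply_right]; exact hij
      · rw [Equiv.swap_apply_of_ne_of_ne h1 h2]
  simp only [Equiv.Perm.mul_apply]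
  by_cases h : t.val < B
  · rw [if_pos h, if_pos (hcond.mpr h)]
  · rw [if_neg h, if_neg (fun hh => h (hcond.mp hh))]


lemma U_adjswap {n : ℕ} (p k : Fin n → ℝ) (v : ℝ) (σ : Equiv.Perm (Fin n)) (i j : Fin n)
    (hij : j.val = i.val + 1) (hjB : j.val < B) (hB : B ≤ n) :
    U n p k v (σ * Equiv.swap i j) B
      = U n p k v σ B + (p (σ j) * k (σ i) - p (σ i) * k (σ j)) := by
  have hne : i ≠ j := by intro h; rw [h] at hij; omega
  set σ' := σ * Equiv.swap i j with hσ'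
  have hσ'i : σ' i = σ j := by
    simp only [hσ', Equiv.Perm.mul_apply, Equiv.swap_apply_left]
  have hσ'j : σ' j = σ i := by
    simp only [hσ', Equiv.Perm.mul_apply, Equiv.swap_apply_right]
  have hσ't : ∀ t : Fin n, t ≠ i → t ≠ j → σ' t = σ t := by
    intro t h1 h2
    simp only [hσ', Equiv.Perm.mul_apply, Equiv.swap_apply_of_ne_of_ne h1 h2]
  -- lam agreement at every B' except j.val
  have hlam : ∀ B' : ℕ, B' ≠ j.val → lam n p σ' B' = lam n p σ B' := by
    intro B' hB'
    apply lam_swap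
    omega
  have hlamj : lam n p σ' j.val = lam n p σ i.val + p (σ j) := by
    have hi : i.val < n := lt_of_lt_of_le (by omega) hB
    have : (⟨i.val, hi⟩ : Fin n) = i := Fin.ext rfl
    rw [hij, lam_step p σ' i.val hi, this, hσ'i, hlam i.val (by omega)]
  have hlamjv : lam n p σ j.val = lam n p σ i.val + p (σ i) := by
    have hi : i.val < n := lt_of_lt_of_le (by omega) hB
    have : (⟨i.val, hi⟩ : Fin n) = i := Fin.ext rfl
    rw [hij, lam_step p σ i.val hi, this]
  -- split the cost sums
  have hsplit : ∀ f : Fin n → ℝ, ∑ t : Fin n, f t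
      = f i + (f j + ∑ t ∈ (Finset.univ.erase i).erase j, f t) := by
    intro f
    rw [Finset.add_sum_erase _ f (Finset.mem_erase.mpr ⟨hne.symm, Finset.mem_univ j⟩),
      Finset.add_sum_erase _ f (Finset.mem_univ i)]
  unfold U
  rw [hlam B (by omega)]
  rw [hsplit (fun t => if t.val < B then k (σ' t) * (1 - lam n p σ' t.val) else 0),
      hsplit (fun t => if t.val < B then k (σ t) * (1 - lam n p σ t.val) else 0)]
  have hrest : ∑ t ∈ (Finset.univ.erase i).erase j,
      (if t.val < B then k (σ' t) * (1 - lam n p σ' t.val) else 0)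
      = ∑ t ∈ (Finset.univ.erase i).erase j,
      (if t.val < B then k (σ t) * (1 - lam n p σ t.val) else 0) := by
    apply Finset.sum_congr rfl
    intro t ht
    have h2 : t ≠ j := (Finset.mem_erase.mp ht).1
    have h1 : t ≠ i := (Finset.mem_erase.mp (Finset.mem_erase.mp ht).2).1
    have h3 : t.val ≠ j.val := fun hh => h2 (Fin.ext hh)
    rw [hσ't t h1 h2, hlam t.val h3]
  rw [hrest]
  have hiB : i.val < B := by omega
  rw [if_pos hiB, if_pos hiB, if_pos hjB, if_pos hjB]
  rw [hσ'i, hσ'j, hlam i.val (by omega), hlamj, hlamjv]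
  ring


lemma mem_Spre {n Bstar : ℕ} (σ : Equiv.Perm (Fin n)) (x : Fin n) :
    x ∈ Spre n Bstar σ ↔ ∃ t : Fin n, t.val < Bstar ∧ σ t = x := by
  simp [Spre, Finset.mem_image, Finset.mem_filter]

lemma card_Spre {n Bstar : ℕ} (σ : Equiv.Perm (Fin n)) :
    (Spre n Bstar σ).card = (Finset.univ.filter fun t : Fin n => t.val < Bstar).card :=
  Finset.card_image_of_injective _ σ.injective

lemma Spre_swap_prefix {n Bstar : ℕ} (σ : Equiv.Perm (Fin n)) (i j : Fin n)
    (hi : i.val < Bstar) (hj : j.val < Bstar) :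
    Spre n Bstar (σ * Equiv.swap i j) = Spre n Bstar σ := by
  ext x
  rw [mem_Spre, mem_Spre]
  constructor
  · rintro ⟨t, ht, he⟩
    refine ⟨Equiv.swap i j t, ?_, ?_⟩
    · by_cases h1 : t = i
      · subst h1; rw [Equiv.swap_apply_left]; exact hj
      · by_cases h2 : t = j
        · subst h2; rw [Equiv.swap_apply_right]; exact hi
        · rw [Equiv.swap_apply_of_ne_of_ne h1 h2]; exact ht
    · simpa [Equiv.Perm.mul_apply] using he
  · rintro ⟨t, ht, he⟩
    refine ⟨Equiv.swap i j t, ?_, ?_⟩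
    · by_cases h1 : t = i
      · subst h1; rw [Equiv.swap_apply_left]; exact hj
      · by_cases h2 : t = j
        · subst h2; rw [Equiv.swap_apply_right]; exact hi
        · rw [Equiv.swap_apply_of_ne_of_ne h1 h2]; exact ht
    · simp only [Equiv.Perm.mul_apply, Equiv.swap_apply_self]
      exact he

lemma Spre_swap_boundary {n Bstar : ℕ} (σ : Equiv.Perm (Fin n)) (i s : Fin n)
    (hi : i.val < Bstar) (hs : Bstar ≤ s.val) :
    Spre n Bstar (σ * Equiv.swap i s)
      = insert (σ s) ((Spre n Bstar σ).erase (σ i)) := by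
  ext x
  rw [mem_Spre, Finset.mem_insert, Finset.mem_erase, mem_Spre]
  constructor
  · rintro ⟨t, ht, he⟩
    simp only [Equiv.Perm.mul_apply] at he
    by_cases h1 : t = i
    · subst h1; rw [Equiv.swap_apply_left] at he; left; exact he.symm
    · have h2 : t ≠ s := by intro h; subst h; omega
      rw [Equiv.swap_apply_of_ne_of_ne h1 h2] at he
      right
      refine ⟨?_, t, ht, he⟩
      rw [← he]
      exact fun hh => h1 (σ.injective hh)
  · rintro (he | ⟨hne, t, ht, he⟩)
    · exact ⟨i, hi, by simp [Equiv.Perm.mul_apply, he]⟩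
    · refine ⟨t, ht, ?_⟩
      have h1 : t ≠ i := by intro h; subst h; exact hne he.symm
      have h2 : t ≠ s := by intro h; subst h; omega
      simp [Equiv.Perm.mul_apply, Equiv.swap_apply_of_ne_of_ne h1 h2, he]


lemma boundary_swap {n : ℕ} (p k : Fin n → ℝ) (v : ℝ)
    (hp : ∀ i, 0 ≤ p i) (hpsum : ∑ i, p i ≤ 1) (hk : ∀ i, 0 < k i) (hv : 0 ≤ v)
    (M : ℝ) (Bstar : ℕ) (hB0 : 0 < Bstar) (hBn : Bstar ≤ n)
    (hle : ∀ (σ : Equiv.Perm (Fin n)) (B : ℕ), B ≤ n → U n p k v σ B ≤ M)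
    (σ : Equiv.Perm (Fin n)) (hGood : U n p k v σ Bstar = M)
    (i s : Fin n) (hi : i.val = Bstar - 1) (hs : Bstar ≤ s.val)
    (hratio : p (σ s) * k (σ i) ≥ p (σ i) * k (σ s)) :
    M ≤ U n p k v (σ * Equiv.swap i s) Bstar := by
  have hBltn : Bstar - 1 < n := by omega
  have hBn' : Bstar < n := by have := s.isLt; omega
  have hieq : (⟨Bstar - 1, hBltn⟩ : Fin n) = i := Fin.ext hi.symm
  set a := σ i with ha
  set b := σ s with hb
  set L := lam n p σ (Bstar - 1) with hL
  -- step at Bstar - 1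
  have hstep1 : U n p k v σ Bstar = U n p k v σ (Bstar - 1) + (v * p a - k a * (1 - L)) := by
    have := U_step p k v σ (Bstar - 1) hBltn
    rw [hieq] at this
    rw [show Bstar - 1 + 1 = Bstar by omega] at this
    rw [this, ← ha, ← hL]
  have h1 : 0 ≤ v * p a - k a * (1 - L) := by
    have := hle σ (Bstar - 1) (by omega)
    linarith [hstep1, hGood]
  -- the permutation with b at position Bstar
  set iB : Fin n := ⟨Bstar, hBn'⟩ with hiB
  set σ2 := σ * Equiv.swap iB s with hσ2
  have hσ2pre : ∀ t : Fin n, t.val < Bstar → σ2 t = σ t := by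
    intro t ht
    have h1' : t ≠ iB := by intro h; rw [h] at ht; simp [hiB] at ht
    have h2' : t ≠ s := by intro h; rw [h] at ht; omega
    simp only [hσ2, Equiv.Perm.mul_apply, Equiv.swap_apply_of_ne_of_ne h1' h2']
  have hU2 : U n p k v σ2 Bstar = M := by
    rw [U_congr p k v σ2 σ Bstar hσ2pre, hGood]
  have hlam2 : lam n p σ2 Bstar = lam n p σ Bstar := by
    apply lam_swap
    simp only [hiB]
    omega
  have hσ2B : σ2 iB = b := by
    simp only [hσ2, Equiv.Perm.mul_apply, Equiv.swap_apply_left, hb]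
  have hΛstep : lam n p σ Bstar = L + p a := by
    have := lam_step p σ (Bstar - 1) hBltn
    rw [hieq, show Bstar - 1 + 1 = Bstar by omega] at this
    rw [this, ← ha, ← hL]
  have h2 : v * p b - k b * (1 - (L + p a)) ≤ 0 := by
    have hstep2 := U_step p k v σ2 Bstar hBn'
    have hle2 := hle σ2 (Bstar + 1) (by omega)
    rw [hstep2, hU2, hlam2, hΛstep] at hle2
    have : σ2 ⟨Bstar, hBn'⟩ = b := hσ2B
    rw [this] at hle2
    linarith
  -- squeeze
  have hka := hk a
  have hkb := hk b
  have hpa := hp a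
  have hpb := hp b
  have hL1 : L ≤ 1 := lam_le_one p hp hpsum σ (Bstar - 1)
  have hvb_ge : k b * (1 - L) ≤ v * p b := by
    have h1' : k a * (1 - L) ≤ v * p a := by linarith
    have : k a * (k b * (1 - L)) ≤ k a * (v * p b) := by nlinarith
    exact le_of_mul_le_mul_left (by linarith [this]) hka
  have hpa0 : p a = 0 := by nlinarith
  have hLeq : L = 1 := by nlinarith
  have hvpb : v * p b = 0 := by nlinarith
  -- now compute U of the swapped permutation
  set σ' := σ * Equiv.swap i s with hσ'
  have hσ'pre : ∀ t : Fin n, t.val < Bstar - 1 → σ' t = σ t := by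
    intro t ht
    have h1' : t ≠ i := by intro h; rw [h] at ht; omega
    have h2' : t ≠ s := by intro h; rw [h] at ht; omega
    simp only [hσ', Equiv.Perm.mul_apply, Equiv.swap_apply_of_ne_of_ne h1' h2']
  have hσ'i : σ' i = b := by
    simp only [hσ', Equiv.Perm.mul_apply, Equiv.swap_apply_left, hb]
  have hlam' : lam n p σ' (Bstar - 1) = L := by
    rw [hL]
    apply lam_swap
    omega
  have hUpre : U n p k v σ' (Bstar - 1) = U n p k v σ (Bstar - 1) :=
    U_congr p k v σ' σ (Bstar - 1) (fun t ht => hσ'pre t ht)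
  have hstep' : U n p k v σ' Bstar
      = U n p k v σ' (Bstar - 1) + (v * p b - k b * (1 - L)) := by
    have := U_step p k v σ' (Bstar - 1) hBltn
    rw [hieq, show Bstar - 1 + 1 = Bstar by omega, hσ'i, hlam'] at this
    exact this
  have hUσpre : U n p k v σ (Bstar - 1) = M := by
    rw [hstep1, hpa0, hLeq] at hGood
    linarith [hGood]
  rw [hstep', hUpre, hUσpre, hLeq, hvpb]
  simp


lemma bubble_lemma {n : ℕ} (p k : Fin n → ℝ) (v : ℝ) (M : ℝ) (Bstar : ℕ) (hBstar : Bstar ≤ n)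
    (hle : ∀ (σ : Equiv.Perm (Fin n)) (B : ℕ), B ≤ n → U n p k v σ B ≤ M) :
    ∀ m : ℕ, ∀ (σ : Equiv.Perm (Fin n)) (t : Fin n), t.val < Bstar →
    Bstar - 1 - t.val ≤ m → U n p k v σ Bstar = M →
    (∀ u : Fin n, t.val < u.val → u.val < Bstar → p (σ t) * k (σ u) ≤ p (σ u) * k (σ t)) →
    ∃ σ' : Equiv.Perm (Fin n), U n p k v σ' Bstar = M ∧ Spre n Bstar σ' = Spre n Bstar σ ∧
      ∀ h1 : Bstar - 1 < n, σ' ⟨Bstar - 1, h1⟩ = σ t := by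
  intro m
  induction m with
  | zero =>
      intro σ t ht hm hG _
      exact ⟨σ, hG, rfl, fun h1 => by congr 1; exact Fin.ext (show Bstar - 1 = t.val by omega)⟩
  | succ m ih =>
      intro σ t ht hm hG hmin
      by_cases hend : t.val = Bstar - 1
      · exact ⟨σ, hG, rfl, fun h1 => by congr 1; exact Fin.ext (show Bstar - 1 = t.val by omega)⟩
      · have htn : t.val + 1 < Bstar := by omega
        set j : Fin n := ⟨t.val + 1, by omega⟩ with hjdef
        have hjv : j.val = t.val + 1 := rfl
        set σ1 := σ * Equiv.swap t j with hσ1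
        have hU1 : U n p k v σ1 Bstar
            = U n p k v σ Bstar + (p (σ j) * k (σ t) - p (σ t) * k (σ j)) :=
          U_adjswap p k v σ t j rfl htn hBstar
        have hd : p (σ t) * k (σ j) ≤ p (σ j) * k (σ t) := hmin j (by omega) htn
        have hGood1 : U n p k v σ1 Bstar = M :=
          le_antisymm (hle σ1 Bstar hBstar) (by rw [hU1, hG]; linarith)
        have hσ1j : σ1 j = σ t := by
          simp only [hσ1, Equiv.Perm.mul_apply, Equiv.swap_apply_right]
        have hmin1 : ∀ u : Fin n, j.val < u.val → u.val < Bstar →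
            p (σ1 j) * k (σ1 u) ≤ p (σ1 u) * k (σ1 j) := by
          intro u hu1 hu2
          have hu_ne1 : u ≠ t := by intro h; subst h; omega
          have hu_ne2 : u ≠ j := by intro h; subst h; omega
          have hσ1u : σ1 u = σ u := by
            simp only [hσ1, Equiv.Perm.mul_apply, Equiv.swap_apply_of_ne_of_ne hu_ne1 hu_ne2]
          rw [hσ1j, hσ1u]
          exact hmin u (by omega) hu2
        obtain ⟨σ', hG', hS', hlast⟩ := ih σ1 j htn (by omega) hGood1 hmin1
        refine ⟨σ', hG', ?_, fun h1 => by rw [hlast h1, hσ1j]⟩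
        rw [hS', hσ1, Spre_swap_prefix σ t j (by omega) htn]


lemma phase1_lemma {n : ℕ} (p k : Fin n → ℝ) (v : ℝ)
    (hp : ∀ i, 0 ≤ p i) (hpsum : ∑ i, p i ≤ 1) (hk : ∀ i, 0 < k i) (hv : 0 ≤ v)
    (M : ℝ) (Bstar : ℕ) (hBstar : Bstar ≤ n)
    (hle : ∀ (σ : Equiv.Perm (Fin n)) (B : ℕ), B ≤ n → U n p k v σ B ≤ M)
    (π : Equiv.Perm (Fin n))
    (hnoinv : ∀ a b : Fin n, a ≤ b → p (π a) * k (π b) ≥ p (π b) * k (π a)) :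
    ∀ d : ℕ, ∀ σ : Equiv.Perm (Fin n), U n p k v σ Bstar = M →
    (Spre n Bstar σ \ Spre n Bstar π).card ≤ d →
    ∃ σ' : Equiv.Perm (Fin n), U n p k v σ' Bstar = M ∧ Spre n Bstar σ' = Spre n Bstar π := by
  intro d
  induction d with
  | zero =>
      intro σ hG hc
      have hsub : Spre n Bstar σ ⊆ Spre n Bstar π :=
        Finset.sdiff_eq_empty_iff_subset.mp (Finset.card_eq_zero.mp (Nat.le_zero.mp hc))
      have hcards : (Spre n Bstar π).card ≤ (Spre n Bstar σ).card := by
        rw [card_Spre, card_Spre]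
      exact ⟨σ, hG, Finset.eq_of_subset_of_card_le hsub hcards⟩
  | succ d ih =>
      intro σ hG hc
      by_cases h0 : (Spre n Bstar σ \ Spre n Bstar π).card = 0
      · exact ih σ hG (by omega)
      · have hne : (Spre n Bstar σ \ Spre n Bstar π).Nonempty := Finset.card_pos.mp (by omega)
        obtain ⟨a, haS, hmin⟩ := Finset.exists_min_image _ (fun x => p x / k x) hne
        have haσ : a ∈ Spre n Bstar σ := (Finset.mem_sdiff.mp haS).1
        have haπ : a ∉ Spre n Bstar π := (Finset.mem_sdiff.mp haS).2
        have hcards : (Spre n Bstar σ).card = (Spre n Bstar π).card := by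
          rw [card_Spre, card_Spre]
        have hbne : (Spre n Bstar π \ Spre n Bstar σ).Nonempty := by
          rw [← Finset.card_pos, Finset.card_sdiff_comm hcards.symm]
          omega
        obtain ⟨b, hbS⟩ := hbne
        have hbπ : b ∈ Spre n Bstar π := (Finset.mem_sdiff.mp hbS).1
        have hbσ : b ∉ Spre n Bstar σ := (Finset.mem_sdiff.mp hbS).2
        obtain ⟨ta, hta, htaeq⟩ := (mem_Spre σ a).mp haσ
        have hB0 : 0 < Bstar := by omega
        -- a = π r with r beyond the prefix
        have hra : π (π⁻¹ a) = a := Equiv.apply_symm_apply π a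
        have hrB : Bstar ≤ (π⁻¹ a).val := by
          by_contra h
          push_neg at h
          exact haπ ((mem_Spre π a).mpr ⟨π⁻¹ a, h, hra⟩)
        -- min condition for the bubble
        have hminc : ∀ u : Fin n, ta.val < u.val → u.val < Bstar →
            p (σ ta) * k (σ u) ≤ p (σ u) * k (σ ta) := by
          intro u _ hu2
          have hcσ : σ u ∈ Spre n Bstar σ := (mem_Spre σ (σ u)).mpr ⟨u, hu2, rfl⟩
          rw [htaeq]
          by_cases hcπ : σ u ∈ Spre n Bstar π
          · obtain ⟨w, hw, hwc⟩ := (mem_Spre π (σ u)).mp hcπ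
            have hwr : w ≤ π⁻¹ a := by
              rw [Fin.le_def]; omega
            have hni := hnoinv w (π⁻¹ a) hwr
            rw [hwc, hra] at hni
            linarith
          · have hcS : σ u ∈ Spre n Bstar σ \ Spre n Bstar π :=
              Finset.mem_sdiff.mpr ⟨hcσ, hcπ⟩
            have := hmin (σ u) hcS
            exact (div_le_div_iff₀ (hk a) (hk (σ u))).mp this
        obtain ⟨σ2, hG2, hS2, hlast⟩ :=
          bubble_lemma p k v M Bstar hBstar hle (Bstar - 1) σ ta hta (by omega) hG hminc
        have hBn1 : Bstar - 1 < n := by omega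
        have hσ2i : σ2 ⟨Bstar - 1, hBn1⟩ = a := by rw [hlast hBn1, htaeq]
        have hbσ2 : b ∉ Spre n Bstar σ2 := by rw [hS2]; exact hbσ
        have hsb : σ2 (σ2⁻¹ b) = b := Equiv.apply_symm_apply σ2 b
        have hsB : Bstar ≤ (σ2⁻¹ b).val := by
          by_contra h
          push_neg at h
          exact hbσ2 ((mem_Spre σ2 b).mpr ⟨σ2⁻¹ b, h, hsb⟩)
        obtain ⟨w, hw, hwb⟩ := (mem_Spre π b).mp hbπ
        have hratio : p b * k a ≥ p a * k b := by
          have hni := hnoinv w (π⁻¹ a) (by rw [Fin.le_def]; omega)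
          rw [hwb, hra] at hni
          exact hni
        have hbd := boundary_swap p k v hp hpsum hk hv M Bstar hB0 hBstar hle σ2 hG2
          ⟨Bstar - 1, hBn1⟩ (σ2⁻¹ b) rfl hsB (by rw [hσ2i, hsb]; exact hratio)
        set σ3 := σ2 * Equiv.swap ⟨Bstar - 1, hBn1⟩ (σ2⁻¹ b) with hσ3
        have hG3 : U n p k v σ3 Bstar = M := le_antisymm (hle σ3 Bstar hBstar) hbd
        have hS3 : Spre n Bstar σ3 = insert b ((Spre n Bstar σ).erase a) := by
          rw [hσ3, Spre_swap_boundary σ2 ⟨Bstar - 1, hBn1⟩ (σ2⁻¹ b)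
            (show Bstar - 1 < Bstar by omega) hsB, hsb, hσ2i, hS2]
        have hcard3 : (Spre n Bstar σ3 \ Spre n Bstar π).card ≤ d := by
          have hset : Spre n Bstar σ3 \ Spre n Bstar π
              = (Spre n Bstar σ \ Spre n Bstar π).erase a := by
            rw [hS3]
            ext x
            simp only [Finset.mem_sdiff, Finset.mem_insert, Finset.mem_erase]
            constructor
            · rintro ⟨(rfl | ⟨hxa, hxσ⟩), hxπ⟩
              · exact absurd hbπ hxπ
              · exact ⟨hxa, hxσ, hxπ⟩
            · rintro ⟨hxa, hxσ, hxπ⟩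
              exact ⟨Or.inr ⟨hxa, hxσ⟩, hxπ⟩
          rw [hset, Finset.card_erase_of_mem haS]
          omega
        exact ih σ3 hG3 hcard3


lemma phase2_lemma {n : ℕ} (p k : Fin n → ℝ) (v : ℝ)
    (M : ℝ) (Bstar : ℕ) (hBstar : Bstar ≤ n)
    (hle : ∀ (σ : Equiv.Perm (Fin n)) (B : ℕ), B ≤ n → U n p k v σ B ≤ M)
    (π : Equiv.Perm (Fin n))
    (hnoinv : ∀ a b : Fin n, a ≤ b → p (π a) * k (π b) ≥ p (π b) * k (π a)) :
    ∀ c m : ℕ, ∀ σ : Equiv.Perm (Fin n), m + c = Bstar → U n p k v σ Bstar = M →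
    Spre n Bstar σ = Spre n Bstar π →
    (∀ u : Fin n, u.val < m → σ u = π u) →
    ∃ σ' : Equiv.Perm (Fin n), U n p k v σ' Bstar = M ∧
      ∀ u : Fin n, u.val < Bstar → σ' u = π u := by
  intro c
  induction c with
  | zero =>
      intro m σ hmc hG _ hag
      exact ⟨σ, hG, fun u hu => hag u (by omega)⟩
  | succ c ih =>
      intro m σ hmc hG hS hag
      have hmB : m < Bstar := by omega
      have hmn : m < n := by omega
      have hmem : π ⟨m, hmn⟩ ∈ Spre n Bstar σ := by
        rw [hS]; exact (mem_Spre _ _).mpr ⟨⟨m, hmn⟩, hmB, rfl⟩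
      obtain ⟨s0, hs0B, hs0⟩ := (mem_Spre σ _).mp hmem
      have hs0m : m ≤ s0.val := by
        by_contra h
        push_neg at h
        have h2 := hag s0 h
        rw [h2] at hs0
        have := congrArg Fin.val (π.injective hs0)
        simp at this
        omega
      have inner : ∀ dj : ℕ, ∀ (σ : Equiv.Perm (Fin n)) (s : Fin n),
          s.val - m ≤ dj → m ≤ s.val → s.val < Bstar →
          U n p k v σ Bstar = M → Spre n Bstar σ = Spre n Bstar π →
          (∀ u : Fin n, u.val < m → σ u = π u) → σ s = π ⟨m, hmn⟩ →
          ∃ σ2 : Equiv.Perm (Fin n), U n p k v σ2 Bstar = M ∧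
            Spre n Bstar σ2 = Spre n Bstar π ∧
            ∀ u : Fin n, u.val < m + 1 → σ2 u = π u := by
        intro dj
        induction dj with
        | zero =>
            intro σ s hd h1 h2 hG hS hag hs
            refine ⟨σ, hG, hS, fun u hu => ?_⟩
            by_cases hum : u.val < m
            · exact hag u hum
            · have hus : u = s := Fin.ext (by omega)
              rw [hus, hs]
              congr 1
              exact Fin.ext (show m = s.val by omega)
        | succ dj ihj =>
            intro σ s hd h1 h2 hG hS hag hs
            by_cases hsm : s.val = m
            · exact ihj σ s (by omega) h1 h2 hG hS hag hs
            · have hsm' : m < s.val := by omega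
              have hin : s.val - 1 < n := by omega
              set i : Fin n := ⟨s.val - 1, hin⟩ with hidef
              have hineq : s.val = i.val + 1 := by simp [hidef]; omega
              have hxS : σ i ∈ Spre n Bstar π := by
                rw [← hS]; exact (mem_Spre σ (σ i)).mpr ⟨i, by omega, rfl⟩
              obtain ⟨w, hwB, hwx⟩ := (mem_Spre π (σ i)).mp hxS
              have hwm : m < w.val := by
                rcases lt_trichotomy w.val m with h | h | h
                · exfalso
                  have hwi : w = i := σ.injective (by rw [hag w h, hwx])
                  have := congrArg Fin.val hwi
                  simp [hidef] at this
                  omega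
                · exfalso
                  have hw' : w = ⟨m, hmn⟩ := Fin.ext h
                  rw [hw'] at hwx
                  have hsi : s = i := σ.injective (by rw [hs, hwx])
                  have := congrArg Fin.val hsi
                  simp [hidef] at this
                  omega
                · exact h
              have hratio : p (σ i) * k (π ⟨m, hmn⟩) ≤ p (π ⟨m, hmn⟩) * k (σ i) := by
                have hni := hnoinv ⟨m, hmn⟩ w (by rw [Fin.le_def]; simp; omega)
                rw [hwx] at hni
                linarith
              set σ1 := σ * Equiv.swap i s with hσ1
              have hU1 := U_adjswap p k v σ i s hineq h2 hBstar
              have hG1 : U n p k v σ1 Bstar = M := by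
                refine le_antisymm (hle σ1 Bstar hBstar) ?_
                rw [← hσ1] at hU1
                rw [hU1, hG, hs]
                linarith
              have hσ1i : σ1 i = π ⟨m, hmn⟩ := by
                rw [hσ1]
                simp only [Equiv.Perm.mul_apply, Equiv.swap_apply_left]
                exact hs
              have hS1 : Spre n Bstar σ1 = Spre n Bstar π := by
                rw [hσ1, Spre_swap_prefix σ i s (by omega) h2, hS]
              have hag1 : ∀ u : Fin n, u.val < m → σ1 u = π u := by
                intro u hu
                have h1' : u ≠ i := by
                  intro h; have := congrArg Fin.val h; simp [hidef] at this; omega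
                have h2' : u ≠ s := by
                  intro h; have := congrArg Fin.val h; omega
                rw [hσ1]
                simp only [Equiv.Perm.mul_apply, Equiv.swap_apply_of_ne_of_ne h1' h2']
                exact hag u hu
              exact ihj σ1 i (by omega) (by omega) (by omega) hG1 hS1 hag1 hσ1i
      obtain ⟨σ2, hG2, hS2, hag2⟩ :=
        inner (s0.val - m) σ s0 le_rfl hs0m hs0B hG hS hag hs0
      exact ih (m + 1) σ2 (by omega) hG2 hS2 hag2



theorem stmt_0 (n : ℕ) (p k : Fin n → ℝ) (v : ℝ)
    (hp : ∀ i, 0 ≤ p i) (hpsum : ∑ i, p i ≤ 1) (hk : ∀ i, 0 < k i) (hv : 0 ≤ v)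
    (πstar : Equiv.Perm (Fin n)) (Bstar : ℕ) (hBstar : Bstar ≤ n)
    (hopt : ∀ (π : Equiv.Perm (Fin n)) (B : ℕ), B ≤ n →
      U n p k v πstar Bstar ≥ U n p k v π B)
    (π : Equiv.Perm (Fin n))
    (hnoinv : ∀ a b : Fin n, a ≤ b → p (π a) * k (π b) ≥ p (π b) * k (π a)) :
    U n p k v π Bstar ≥ U n p k v πstar Bstar ∧
      ∀ (π' : Equiv.Perm (Fin n)) (B' : ℕ), B' ≤ n →
        U n p k v π Bstar ≥ U n p k v π' B' := by
  set M := U n p k v πstar Bstar with hM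
  have hle : ∀ (σ : Equiv.Perm (Fin n)) (B : ℕ), B ≤ n → U n p k v σ B ≤ M :=
    fun σ B h => hopt σ B h
  obtain ⟨σA, hGA, hSA⟩ := phase1_lemma p k v hp hpsum hk hv M Bstar hBstar hle π hnoinv
    (Spre n Bstar πstar \ Spre n Bstar π).card πstar hM.symm le_rfl
  obtain ⟨σF, hGF, hagF⟩ := phase2_lemma p k v M Bstar hBstar hle π hnoinv Bstar 0 σA
    (by omega) hGA hSA (fun u hu => absurd hu (by omega))
  have hfin : U n p k v π Bstar = M := by
    rw [U_congr p k v π σF Bstar (fun t ht => (hagF t ht).symm)]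
    exact hGF
  constructor
  · exact ge_of_eq hfin
  · intro π' B' hB'
    have := hle π' B' hB'
    rw [hfin]
    exact this
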